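/- Let a, b, p be real with 0 < a < b and p > 0. For Instance H of size n, there exist a constant C and an integer N such that for all n ≥ N, |E[max_{1≤i≤n+1} V_i] − (1 + b·(1 − e^{−p}) + a·e^{−p})| ≤ C/n. -/

import Mathlib

open MeasureTheory ProbabilityTheory

-- lemma A: for 0 ≤ y ≤ x ≤ 1, x^n - y^n ≤ n (x - y)
lemma lemA (x y : ℝ) (hy : 0 ≤ y) (hyx : y ≤ x) (hx : x ≤ 1) (n : ℕ) :
    x ^ n - y ^ n ≤ n * (x - y) := by
  induction n with
  | zero => simp
  | succ k ih =>
    have h1 : y ^ k ≤ x ^ k := pow_le_pow_left₀ hy hyx k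
    have h2 : x ^ k ≤ 1 := pow_le_one₀ (hy.trans hyx) hx
    have h3 : 0 ≤ y ^ k := pow_nonneg hy k
    have : x ^ (k+1) - y ^ (k+1) = x * (x ^ k - y ^ k) + y ^ k * (x - y) := by ring
    rw [this]
    push_cast
    nlinarith [pow_nonneg (hy.trans hyx) k]

-- lemma A': 1 - x^(m+1) ≥ (m+1)(1-x) x^m for x ∈ [0,1]
lemma lemA' (x : ℝ) (hx0 : 0 ≤ x) (hx1 : x ≤ 1) (m : ℕ) :
    ((m : ℝ) + 1) * (1 - x) * x ^ m ≤ 1 - x ^ (m + 1) := by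
  induction m with
  | zero => simp
  | succ k ih =>
    have h3 : 0 ≤ x ^ k := pow_nonneg hx0 k
    have h2 : x * x ^ k ≤ 1 := by
      calc x * x ^ k = x ^ (k+1) := (pow_succ' x k).symm
        _ ≤ 1 := pow_le_one₀ hx0 hx1
    have e1 : x ^ (k+1) = x * x ^ k := pow_succ' x k
    have e2 : x ^ (k+1+1) = x * (x * x ^ k) := by rw [pow_succ' x (k+1), e1]
    rw [e1] at ih ⊢
    rw [e2]
    push_cast
    nlinarith [mul_le_mul_of_nonneg_left ih hx0,
      mul_nonneg (sub_nonneg.2 hx1) (sub_nonneg.2 h2)]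

-- lemma B: exp(-t) ≤ 1 - t + t^2 for t ≥ 0
lemma lemB (t : ℝ) (ht : 0 ≤ t) : Real.exp (-t) ≤ 1 - t + t ^ 2 := by
  have h1 : t + 1 ≤ Real.exp t := Real.add_one_le_exp t
  have h2 : Real.exp (-t) * Real.exp t = 1 := by
    rw [← Real.exp_add]; simp
  have h3 : 0 < Real.exp (-t) := Real.exp_pos _
  nlinarith [Real.exp_pos t]


lemma integral_max (a b p : ℝ) (ha : 0 < a) (hab : a < b) (hp : 0 < p) (n : ℕ)
    (hn : 0 < n) (hbn : b < n)
    (Ω : Type) (mΩ : MeasurableSpace Ω) (P : Measure Ω) (hPP : IsProbabilityMeasure P)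
    (V : Fin (n + 1) → Ω → ℝ)
    (hVm : ∀ i, Measurable (V i))
    (hind : iIndepFun V P)
    (hdist : ∀ i : Fin (n + 1), (i : ℕ) < n →
      (P {ω | V i ω = (n : ℝ)}).toReal = 1 / (n : ℝ) ^ 2 ∧
      (P {ω | V i ω = b}).toReal = p / n ∧
      (P {ω | V i ω = 0}).toReal = 1 - p / n - 1 / (n : ℝ) ^ 2)
    (hlast : ∀ᵐ ω ∂P, V (Fin.last n) ω = a) :
    ∫ ω, (⨆ i, V i ω) ∂P
      = (n : ℝ) * (1 - (1 - 1/(n:ℝ)^2)^n)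
        + b * ((1 - 1/(n:ℝ)^2)^n - (1 - p/n - 1/(n:ℝ)^2)^n)
        + a * (1 - p/n - 1/(n:ℝ)^2)^n := by
  have hnR : (0:ℝ) < n := by exact_mod_cast hn
  have han : a < (n:ℝ) := hab.trans hbn
  have hnb : (n:ℝ) ≠ b := ne_of_gt hbn
  have hn0 : (n:ℝ) ≠ 0 := ne_of_gt hnR
  have hb0 : b ≠ 0 := ne_of_gt (ha.trans hab)
  -- the index set of the first n variables
  set T : Finset (Fin (n+1)) := Finset.univ.filter (fun i => (i:ℕ) < n) with hTdef
  have hmemT : ∀ i : Fin (n+1), i ∈ T ↔ (i:ℕ) < n := by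
    intro i; simp [hTdef]
  have hTcard : T.card = n := by
    have : T = Finset.univ.erase (Fin.last n) := by
      ext i
      simp only [hTdef, Finset.mem_filter, Finset.mem_univ, true_and, Finset.mem_erase,
        and_true]
      constructor
      · intro h hlast; rw [hlast] at h; simp [Fin.last] at h
      · intro h
        have hi := i.isLt
        rcases lt_or_eq_of_le (Nat.lt_succ_iff.mp hi) with h' | h'
        · exact h'
        · exact absurd (Fin.ext h' : i = Fin.last n) h
    rw [this, Finset.card_erase_of_mem (Finset.mem_univ _), Finset.card_univ,
      Fintype.card_fin]
    omega
  -- classify indices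
  have hclass : ∀ j : Fin (n+1), j ∈ T ∨ j = Fin.last n := by
    intro j
    by_cases h : (j:ℕ) < n
    · exact Or.inl ((hmemT j).mpr h)
    · right
      have hj := j.isLt
      have hje : (j:ℕ) = n := by omega
      exact Fin.ext (by simp [Fin.last, hje])
  -- per-coordinate sets
  have hsetn : ∀ i, {ω | V i ω = (n:ℝ)} = V i ⁻¹' {(n:ℝ)} := fun i => rfl
  have hsetb : ∀ i, {ω | V i ω = b} = V i ⁻¹' {b} := fun i => rfl
  have hset0 : ∀ i, {ω | V i ω = (0:ℝ)} = V i ⁻¹' {(0:ℝ)} := fun i => rfl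
  -- measurable singleton preimages
  have hmn : ∀ i, MeasurableSet (V i ⁻¹' {(n:ℝ)}) :=
    fun i => hVm i (measurableSet_singleton _)
  have hmb : ∀ i, MeasurableSet (V i ⁻¹' {b}) :=
    fun i => hVm i (measurableSet_singleton _)
  have hm0 : ∀ i, MeasurableSet (V i ⁻¹' {(0:ℝ)}) :=
    fun i => hVm i (measurableSet_singleton _)
  -- main sets
  set D : Set Ω := ⋂ i ∈ T, V i ⁻¹' ({(n:ℝ)}ᶜ) with hDdef
  set Cs : Set Ω := ⋂ i ∈ T, V i ⁻¹' (({(n:ℝ)} ∪ {b})ᶜ) with hCdef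
  have hmD : MeasurableSet D :=
    MeasurableSet.biInter T.countable_toSet
      (fun i _ => hVm i (measurableSet_singleton _).compl)
  have hmCs : MeasurableSet Cs :=
    MeasurableSet.biInter T.countable_toSet
      (fun i _ => hVm i ((measurableSet_singleton _).union (measurableSet_singleton _)).compl)
  set A : Set Ω := Dᶜ with hAdef
  set B : Set Ω := D \ Cs with hBdef
  have hmA : MeasurableSet A := hmD.compl
  have hmB : MeasurableSet B := hmD.diff hmCs
  -- Cs ⊆ D
  have hCsD : Cs ⊆ D := by
    intro ω hω
    rw [hDdef, Set.mem_iInter₂]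
    intro i hi
    rw [hCdef, Set.mem_iInter₂] at hω
    have := hω i hi
    simp only [Set.mem_preimage, Set.mem_compl_iff, Set.mem_union,
      Set.mem_singleton_iff] at this ⊢
    tauto
  -- probabilities of factors
  have hfacD : ∀ i ∈ T, (P (V i ⁻¹' ({(n:ℝ)}ᶜ))).toReal = 1 - 1/(n:ℝ)^2 := by
    intro i hi
    have hlt := (hmemT i).mp hi
    have h1 := (hdist i hlt).1
    rw [hsetn] at h1
    rw [Set.preimage_compl, prob_compl_eq_one_sub (hmn i),
      ENNReal.toReal_sub_of_le prob_le_one ENNReal.one_ne_top, ENNReal.toReal_one, h1]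
  have hfacC : ∀ i ∈ T, (P (V i ⁻¹' (({(n:ℝ)} ∪ {b})ᶜ))).toReal
      = 1 - p/n - 1/(n:ℝ)^2 := by
    intro i hi
    have hlt := (hmemT i).mp hi
    have h1 := (hdist i hlt).1
    have h2 := (hdist i hlt).2.1
    rw [hsetn] at h1; rw [hsetb] at h2
    have hdisj : Disjoint (V i ⁻¹' {(n:ℝ)}) (V i ⁻¹' {b}) := by
      rw [Set.disjoint_left]
      intro ω h1' h2'
      simp only [Set.mem_preimage, Set.mem_singleton_iff] at h1' h2'
      exact hnb (h1' ▸ h2')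
    have hu : P (V i ⁻¹' ({(n:ℝ)} ∪ {b})) = P (V i ⁻¹' {(n:ℝ)}) + P (V i ⁻¹' {b}) := by
      rw [Set.preimage_union, measure_union hdisj (hmb i)]
    have hmU : MeasurableSet (V i ⁻¹' ({(n:ℝ)} ∪ {b})) :=
      hVm i ((measurableSet_singleton _).union (measurableSet_singleton _))
    rw [Set.preimage_compl, prob_compl_eq_one_sub hmU,
      ENNReal.toReal_sub_of_le prob_le_one ENNReal.one_ne_top, ENNReal.toReal_one, hu,
      ENNReal.toReal_add (measure_ne_top P _) (measure_ne_top P _), h1, h2]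
    ring
  -- product formulas
  have hPD : (P D).toReal = (1 - 1/(n:ℝ)^2)^n := by
    have h := hind.meas_biInter (S := T) (s := fun i => V i ⁻¹' ({(n:ℝ)}ᶜ))
      (fun i hi => ⟨{(n:ℝ)}ᶜ, (measurableSet_singleton _).compl, rfl⟩)
    rw [hDdef, h, ENNReal.toReal_prod, Finset.prod_congr rfl hfacD,
      Finset.prod_const, hTcard]
  have hPCs : (P Cs).toReal = (1 - p/n - 1/(n:ℝ)^2)^n := by
    have h := hind.meas_biInter (S := T) (s := fun i => V i ⁻¹' (({(n:ℝ)} ∪ {b})ᶜ))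
      (fun i hi => ⟨({(n:ℝ)} ∪ {b})ᶜ,
        ((measurableSet_singleton _).union (measurableSet_singleton _)).compl, rfl⟩)
    rw [hCdef, h, ENNReal.toReal_prod, Finset.prod_congr rfl hfacC,
      Finset.prod_const, hTcard]
  have hPA : (P A).toReal = 1 - (1 - 1/(n:ℝ)^2)^n := by
    rw [hAdef, prob_compl_eq_one_sub hmD,
      ENNReal.toReal_sub_of_le prob_le_one ENNReal.one_ne_top, ENNReal.toReal_one, hPD]
  have hPB : (P B).toReal = (1 - 1/(n:ℝ)^2)^n - (1 - p/n - 1/(n:ℝ)^2)^n := by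
    rw [hBdef, measure_diff hCsD hmCs.nullMeasurableSet (measure_ne_top P _),
      ENNReal.toReal_sub_of_le (measure_mono hCsD) (measure_ne_top P _), hPD, hPCs]
  -- a.e. each V i takes one of three values
  have hae3 : ∀ i ∈ T, ∀ᵐ ω ∂P, V i ω = (n:ℝ) ∨ V i ω = b ∨ V i ω = 0 := by
    intro i hi
    have hlt := (hmemT i).mp hi
    obtain ⟨h1, h2, h3⟩ := hdist i hlt
    rw [hsetn] at h1; rw [hsetb] at h2; rw [hset0] at h3
    set U : Set Ω := V i ⁻¹' {(n:ℝ)} ∪ V i ⁻¹' {b} ∪ V i ⁻¹' {(0:ℝ)} with hU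
    have hmU : MeasurableSet U := ((hmn i).union (hmb i)).union (hm0 i)
    have hd1 : Disjoint (V i ⁻¹' {(n:ℝ)}) (V i ⁻¹' {b}) := by
      rw [Set.disjoint_left]
      intro ω ha' hb'
      simp only [Set.mem_preimage, Set.mem_singleton_iff] at ha' hb'
      exact hnb (ha' ▸ hb')
    have hd2 : Disjoint (V i ⁻¹' {(n:ℝ)} ∪ V i ⁻¹' {b}) (V i ⁻¹' {(0:ℝ)}) := by
      rw [Set.disjoint_left]
      intro ω ha' hb'
      simp only [Set.mem_union, Set.mem_preimage, Set.mem_singleton_iff] at ha' hb'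
      rcases ha' with h | h
      · exact hn0 (h ▸ hb')
      · exact hb0 (h ▸ hb')
    have hPU : P U = 1 := by
      have : (P U).toReal = 1 := by
        rw [hU, measure_union hd2 (hm0 i), measure_union hd1 (hmb i),
          ENNReal.toReal_add (by finiteness) (measure_ne_top P _),
          ENNReal.toReal_add (measure_ne_top P _) (measure_ne_top P _), h1, h2, h3]
        ring
      have hne : P U ≠ ⊤ := measure_ne_top P _
      rw [← ENNReal.toReal_one] at this
      exact (ENNReal.toReal_eq_toReal_iff' hne ENNReal.one_ne_top).mp this
    have hcompl : P Uᶜ = 0 := (prob_compl_eq_zero_iff hmU).mpr hPU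
    rw [Filter.eventually_iff, mem_ae_iff]
    convert hcompl using 2
    ext ω
    simp [hU, Set.mem_union, Set.mem_preimage]
    tauto
  -- the combined a.e. set
  have hG : ∀ᵐ ω ∂P,
      (∀ i ∈ T, V i ω = (n:ℝ) ∨ V i ω = b ∨ V i ω = 0) ∧ V (Fin.last n) ω = a := by
    refine ((ae_ball_iff T.countable_toSet).mpr hae3).and hlast
  -- pointwise identity
  set g : Ω → ℝ := fun ω =>
    A.indicator (fun _ => (n:ℝ)) ω + B.indicator (fun _ => b) ω
      + Cs.indicator (fun _ => a) ω with hgdef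
  have hae : (fun ω => ⨆ i, V i ω) =ᵐ[P] g := by
    filter_upwards [hG] with ω hω
    obtain ⟨hωT, hωa⟩ := hω
    have hbdd : BddAbove (Set.range fun i => V i ω) := (Set.finite_range _).bddAbove
    have hDmem : ω ∈ D ↔ ∀ i ∈ T, V i ω ≠ (n:ℝ) := by
      rw [hDdef, Set.mem_iInter₂]
      simp [Set.mem_preimage]
    have hCmem : ω ∈ Cs ↔ ∀ i ∈ T, V i ω ≠ (n:ℝ) ∧ V i ω ≠ b := by
      rw [hCdef, Set.mem_iInter₂]
      refine forall₂_congr fun i hi => ?_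
      simp only [Set.mem_preimage, Set.mem_compl_iff, Set.mem_union,
        Set.mem_singleton_iff, not_or]
    by_cases hA : ω ∈ A
    · -- some V i = n; sup = n
      have hnotD : ¬ (∀ i ∈ T, V i ω ≠ (n:ℝ)) := by
        rw [← hDmem]; exact hA
      push_neg at hnotD
      obtain ⟨i, hiT, hieq⟩ := hnotD
      have hub : ∀ j, V j ω ≤ (n:ℝ) := by
        intro j
        rcases hclass j with hj | hj
        · rcases hωT j hj with h | h | h
          · rw [h]
          · rw [h]; exact hbn.le
          · rw [h]; exact hnR.le
        · rw [hj, hωa]; exact han.le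
      have hsup : (⨆ i, V i ω) = (n:ℝ) := by
        refine le_antisymm (ciSup_le hub) ?_
        rw [← hieq]
        exact le_ciSup hbdd i
      have hnB : ω ∉ B := fun h => hA h.1
      have hnC : ω ∉ Cs := fun h => hA (hCsD h)
      rw [hsup, hgdef]
      simp [Set.indicator_of_mem hA, Set.indicator_of_notMem hnB,
        Set.indicator_of_notMem hnC]
    · have hD : ω ∈ D := not_not.mp hA
      have hDne := hDmem.mp hD
      by_cases hC : ω ∈ Cs
      · -- all V i = 0 for i ∈ T; sup = a
        have h0 : ∀ i ∈ T, V i ω = 0 := by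
          intro i hi
          rcases hωT i hi with h | h | h
          · exact absurd h ((hCmem.mp hC i hi).1)
          · exact absurd h ((hCmem.mp hC i hi).2)
          · exact h
        have hub : ∀ j, V j ω ≤ a := by
          intro j
          rcases hclass j with hj | hj
          · rw [h0 j hj]; exact ha.le
          · rw [hj, hωa]
        have hsup : (⨆ i, V i ω) = a := by
          refine le_antisymm (ciSup_le hub) ?_
          rw [← hωa]
          exact le_ciSup hbdd (Fin.last n)
        have hnB : ω ∉ B := fun h => h.2 hC
        rw [hsup, hgdef]
        simp [Set.indicator_of_notMem hA, Set.indicator_of_notMem hnB,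
          Set.indicator_of_mem hC]
      · -- ω ∈ B : some V i = b; sup = b
        have hB : ω ∈ B := ⟨hD, hC⟩
        have hnCne : ¬ ∀ i ∈ T, V i ω ≠ (n:ℝ) ∧ V i ω ≠ b := by
          rw [← hCmem]; exact hC
        push_neg at hnCne
        obtain ⟨i, hiT, hieq⟩ := hnCne
        have hib : V i ω = b := hieq (hDne i hiT)
        have hub : ∀ j, V j ω ≤ b := by
          intro j
          rcases hclass j with hj | hj
          · rcases hωT j hj with h | h | h
            · exact absurd h (hDne j hj)
            · rw [h]
            · rw [h]; exact (ha.trans hab).le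
          · rw [hj, hωa]; exact hab.le
        have hsup : (⨆ i, V i ω) = b := by
          refine le_antisymm (ciSup_le hub) ?_
          rw [← hib]
          exact le_ciSup hbdd i
        rw [hsup, hgdef]
        simp [Set.indicator_of_notMem hA, Set.indicator_of_mem hB,
          Set.indicator_of_notMem hC]
  -- compute the integral
  have iA : Integrable (A.indicator (fun _ => (n:ℝ))) P :=
    (integrable_const _).indicator hmA
  have iB : Integrable (B.indicator (fun _ => b)) P :=
    (integrable_const _).indicator hmB
  have iC : Integrable (Cs.indicator (fun _ => a)) P :=
    (integrable_const _).indicator hmCs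
  have h1 : (∫ ω, (A.indicator (fun _ => (n:ℝ)) ω + B.indicator (fun _ => b) ω)
        + Cs.indicator (fun _ => a) ω ∂P)
      = (∫ ω, (A.indicator (fun _ => (n:ℝ)) ω + B.indicator (fun _ => b) ω) ∂P)
        + ∫ ω, Cs.indicator (fun _ => a) ω ∂P :=
    integral_add (iA.add iB) iC
  rw [integral_congr_ae hae]
  simp only [hgdef]
  rw [h1, integral_add iA iB,
    integral_indicator_const _ hmA, integral_indicator_const _ hmB,
    integral_indicator_const _ hmCs, smul_eq_mul, smul_eq_mul, smul_eq_mul,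
    measureReal_def, measureReal_def, measureReal_def, hPA, hPB, hPCs]
  ring




lemma est (a b p : ℝ) (ha : 0 < a) (hab : a < b) (hp : 0 < p) (n : ℕ)
    (hn2 : 2 ≤ n) (hnp : 2*p + 2 ≤ (n:ℝ)) :
    |((n:ℝ) * (1 - (1 - 1/(n:ℝ)^2)^n)
        + b * ((1 - 1/(n:ℝ)^2)^n - (1 - p/n - 1/(n:ℝ)^2)^n)
        + a * (1 - p/n - 1/(n:ℝ)^2)^n)
      - (1 + b * (1 - Real.exp (-p)) + a * Real.exp (-p))|
      ≤ (1 + b + (b - a) * (1 + p^2)) / n := by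
  have hnR2 : (2:ℝ) ≤ n := by exact_mod_cast hn2
  have hnR : (0:ℝ) < n := by linarith
  have hsq : (1:ℝ)/(n:ℝ)^2 ≤ 1/4 := by
    rw [div_le_div_iff₀ (by positivity) (by norm_num)]
    nlinarith
  have hpn : p/(n:ℝ) ≤ 1/2 := by
    rw [div_le_iff₀ hnR]; linarith
  have hpn0 : 0 ≤ p/(n:ℝ) := by positivity
  have hn0 : (n:ℝ) ≠ 0 := ne_of_gt hnR
  have hsq0 : 0 < (1:ℝ)/(n:ℝ)^2 := by positivity
  set x : ℝ := 1 - 1/(n:ℝ)^2 with hxdef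
  set y : ℝ := 1 - p/(n:ℝ) - 1/(n:ℝ)^2 with hydef
  set w : ℝ := 1 - p/(n:ℝ) with hwdef
  set u : ℝ := Real.exp (-(p/(n:ℝ))) with hudef
  have hx0 : 0 ≤ x := by rw [hxdef]; linarith
  have hx1 : x ≤ 1 := by rw [hxdef]; linarith
  have hy0 : 0 ≤ y := by rw [hydef]; linarith
  have hyw : y ≤ w := by rw [hydef, hwdef]; linarith
  have hw0 : 0 ≤ w := by rw [hwdef]; linarith
  have hw1 : w ≤ 1 := by rw [hwdef]; linarith
  -- x^n bounds
  have hxa : 1 - x ^ n ≤ 1/(n:ℝ) := by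
    have h := lemA 1 x hx0 hx1 (by norm_num) n
    rw [one_pow] at h
    have : (n:ℝ) * (1 - x) = 1/(n:ℝ) := by
      rw [hxdef]; field_simp; ring
    linarith [this ▸ h]
  have hxup : x ^ n ≤ 1 := pow_le_one₀ hx0 hx1
  have hxlow : 1 - 1/(n:ℝ) ≤ (n:ℝ) * (1 - x ^ n) := by
    obtain ⟨m, rfl⟩ : ∃ m, n = m + 1 := ⟨n - 1, by omega⟩
    have h1 := lemA' x hx0 hx1 m
    have hcast : ((m:ℝ) + 1) = ((m+1 : ℕ) : ℝ) := by push_cast; ring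
    have h2 : ((m+1 : ℕ):ℝ) * (1 - x) * x ^ m ≤ 1 - x ^ (m+1) := by
      rw [← hcast]; exact h1
    have h3 : ((m+1 : ℕ):ℝ) * (1 - x) = 1/((m+1:ℕ):ℝ) := by
      rw [hxdef]; field_simp; ring
    rw [h3] at h2
    -- so (1/n) x^m ≤ 1 - x^n, multiply by n
    have h4 : x ^ m ≤ ((m+1:ℕ):ℝ) * (1 - x ^ (m+1)) := by
      have := mul_le_mul_of_nonneg_left h2 (le_of_lt hnR)
      rw [← mul_assoc] at this
      have hne : ((m+1:ℕ):ℝ) ≠ 0 := ne_of_gt hnR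
      rw [mul_one_div, div_self hne, one_mul] at this
      exact this
    -- and x^m ≥ 1 - 1/n
    have h5 : 1 - x ^ m ≤ 1/((m+1:ℕ):ℝ) := by
      have h := lemA 1 x hx0 hx1 (by norm_num) m
      rw [one_pow] at h
      have hm : (m:ℝ) * (1 - x) ≤ ((m+1:ℕ):ℝ) * (1 - x) := by
        apply mul_le_mul_of_nonneg_right _ (by linarith)
        push_cast; linarith
      calc 1 - x ^ m ≤ (m:ℝ) * (1 - x) := h
        _ ≤ ((m+1:ℕ):ℝ) * (1 - x) := hm
        _ = 1/((m+1:ℕ):ℝ) := h3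
    linarith
  -- y^n vs exp(-p)
  have hwy : w ^ n - y ^ n ≤ 1/(n:ℝ) := by
    have h := lemA w y hy0 hyw hw1 n
    have hdiff : w - y = 1/(n:ℝ)^2 := by rw [hydef]; ring
    have : (n:ℝ) * (w - y) = 1/(n:ℝ) := by
      rw [hdiff]; field_simp
    linarith [this ▸ h]
  have hwu : w ≤ u := by
    rw [hwdef, hudef]
    have := Real.add_one_le_exp (-(p/(n:ℝ)))
    linarith
  have hu1 : u ≤ 1 := by
    rw [hudef]
    calc Real.exp (-(p/(n:ℝ))) ≤ Real.exp 0 := Real.exp_le_exp.mpr (by linarith)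
      _ = 1 := Real.exp_zero
  have huw : u - w ≤ (p/(n:ℝ))^2 := by
    have := lemB (p/(n:ℝ)) hpn0
    rw [hudef, hwdef]; linarith
  have hun : u ^ n = Real.exp (-p) := by
    rw [hudef, ← Real.exp_nat_mul]
    congr 1
    field_simp
    try ring
  have huwn : u ^ n - w ^ n ≤ p^2/(n:ℝ) := by
    have h := lemA u w hw0 hwu hu1 n
    have h2 : (n:ℝ) * (u - w) ≤ (n:ℝ) * (p/(n:ℝ))^2 :=
      mul_le_mul_of_nonneg_left huw (le_of_lt hnR)
    have h3 : (n:ℝ) * (p/(n:ℝ))^2 = p^2/(n:ℝ) := by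
      field_simp
      try ring
    calc u ^ n - w ^ n ≤ (n:ℝ) * (u - w) := h
      _ ≤ (n:ℝ) * (p/(n:ℝ))^2 := h2
      _ = p^2/(n:ℝ) := h3
  have hyE1 : y ^ n ≤ Real.exp (-p) := by
    rw [← hun]
    exact pow_le_pow_left₀ hy0 (hyw.trans hwu) n
  have hyE2 : Real.exp (-p) - y ^ n ≤ (1 + p^2)/(n:ℝ) := by
    have : Real.exp (-p) - y ^ n = (u ^ n - w ^ n) + (w ^ n - y ^ n) := by
      rw [hun]; ring
    rw [this]
    have : (1 + p^2)/(n:ℝ) = 1/(n:ℝ) + p^2/(n:ℝ) := by ring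
    linarith
  -- combine
  have hxupn : (n:ℝ) * (1 - x ^ n) ≤ 1 := by
    have := mul_le_mul_of_nonneg_left hxa (le_of_lt hnR)
    rw [mul_one_div, div_self (ne_of_gt hnR)] at this
    linarith
  have hb0 : 0 ≤ b := le_of_lt (ha.trans hab)
  have hba : 0 ≤ b - a := by linarith
  have g1 : b * (1 - x ^ n) ≤ b * (1/(n:ℝ)) := mul_le_mul_of_nonneg_left hxa hb0
  have g2 : 0 ≤ b * (1 - x ^ n) := mul_nonneg hb0 (by linarith)
  have g3 : (b - a) * (Real.exp (-p) - y ^ n) ≤ (b - a) * ((1 + p^2)/(n:ℝ)) :=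
    mul_le_mul_of_nonneg_left hyE2 hba
  have g4 : 0 ≤ (b - a) * (Real.exp (-p) - y ^ n) := mul_nonneg hba (by linarith)
  have g5 : 0 ≤ (b - a) * ((1 + p^2)/(n:ℝ)) := by positivity
  have hC : (1 + b + (b - a) * (1 + p^2)) / (n:ℝ)
      = 1/(n:ℝ) + b * (1/(n:ℝ)) + (b - a) * ((1 + p^2)/(n:ℝ)) := by ring
  have hkey : ((n:ℝ) * (1 - x ^ n) + b * (x ^ n - y ^ n) + a * y ^ n)
      - (1 + b * (1 - Real.exp (-p)) + a * Real.exp (-p))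
      = ((n:ℝ) * (1 - x ^ n) - 1) - b * (1 - x ^ n)
        + (b - a) * (Real.exp (-p) - y ^ n) := by ring
  rw [abs_le, hC, hkey]
  constructor
  · linarith
  · linarith


/-- for Instance H of size `n` (with parameters `0 < a < b`, `p > 0`), the
prophet's expectation satisfies
`E[max_{1≤i≤n+1} V_i] = 1 + b·(1 − e^{−p}) + a·e^{−p} + O(1/n)`. -/
theorem stmt_2 (a b p : ℝ) (ha : 0 < a) (hab : a < b) (hp : 0 < p) :
    ∃ C : ℝ, ∃ N : ℕ, ∀ n : ℕ, N ≤ n →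
      ∀ (Ω : Type) (_ : MeasurableSpace Ω) (P : Measure Ω) (_ : IsProbabilityMeasure P)
        (V : Fin (n + 1) → Ω → ℝ),
        (∀ i, Measurable (V i)) →
        iIndepFun V P →
        (∀ i : Fin (n + 1), (i : ℕ) < n →
          (P {ω | V i ω = (n : ℝ)}).toReal = 1 / (n : ℝ) ^ 2 ∧
          (P {ω | V i ω = b}).toReal = p / n ∧
          (P {ω | V i ω = 0}).toReal = 1 - p / n - 1 / (n : ℝ) ^ 2) →
        (∀ᵐ ω ∂P, V (Fin.last n) ω = a) →
        |(∫ ω, (⨆ i, V i ω) ∂P) - (1 + b * (1 - Real.exp (-p)) + a * Real.exp (-p))|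
          ≤ C / n := by
  refine ⟨1 + b + (b - a) * (1 + p^2), ⌈b⌉₊ + ⌈2*p⌉₊ + 2, ?_⟩
  intro n hn Ω mΩ P hPP V hVm hind hdist hlast
  have hcast : ((⌈b⌉₊ + ⌈2*p⌉₊ + 2 : ℕ):ℝ) ≤ (n:ℝ) := by exact_mod_cast hn
  push_cast at hcast
  have hbceil : b ≤ (⌈b⌉₊:ℝ) := Nat.le_ceil b
  have hpceil : 2*p ≤ (⌈2*p⌉₊:ℝ) := Nat.le_ceil _
  have hb0 : (0:ℝ) ≤ (⌈b⌉₊:ℝ) := Nat.cast_nonneg _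
  have hp0 : (0:ℝ) ≤ (⌈2*p⌉₊:ℝ) := Nat.cast_nonneg _
  have hn2 : 2 ≤ n := by omega
  have hn0 : 0 < n := by omega
  have hbn : b < (n:ℝ) := by linarith
  have hnp : 2*p + 2 ≤ (n:ℝ) := by linarith
  rw [integral_max a b p ha hab hp n hn0 hbn Ω mΩ P hPP V hVm hind hdist hlast]
  exact est a b p ha hab hp n hn2 hnp
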